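/- Let R be a complete discrete valuation ring of characteristic p > 0 with fraction field K, residue field F, maximal ideal 𝔪 and uniformizer π. Let Ω^1_R(log) be the quotient of Ω^1_R ⊕ (R ⊗_ℤ K^×) by the submodule generated by (da, 0) − (0, a ⊗ a) for a ∈ R \ {0}, and set Ω^1_F(log) = Ω^1_R(log) ⊗_R F. Then there is an exact sequence of F-vector spaces 0 → Ω^1_F → Ω^1_F(log) → F → 0, where the second map sends the class of (0, a ⊗ b) to a·v(b) (a ∈ F, b ∈ K^×), and this sequence is split by the element dlog[π] (the class of (0, 1 ⊗ π)). -/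

import Mathlib

open TensorProduct IsLocalRing

/-- The presentation module `Ω¹_F ⊕ (F ⊗_ℤ K^×)` for the logarithmic differentials of
the residue field `F` of a discrete valuation ring `R` with fraction field `K`.
(`K^×` is written additively as `Additive Kˣ`.) -/
noncomputable abbrev logPresModule (R : Type*) [CommRing R] [IsDomain R]
    [IsDiscreteValuationRing R] : Type _ :=
  (KaehlerDifferential ℤ (ResidueField R)) ×
    (TensorProduct ℤ (ResidueField R) (Additive (FractionRing R)ˣ))

/-- The submodule of relations: it is generated by the elements
`(d ā, 0) − (0, ā ⊗ a)` for `a ∈ R ∖ {0}` (where `ā` is the residue class of `a` and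
the second component uses `a` viewed as a unit `b` of `K = Frac(R)`).  The quotient
`logPresModule R ⧸ logRelations R` is `Ω¹_F(log)`. -/
noncomputable def logRelations (R : Type*) [CommRing R] [IsDomain R]
    [IsDiscreteValuationRing R] : Submodule (ResidueField R) (logPresModule R) :=
  Submodule.span (ResidueField R)
    {z | ∃ (a : R) (b : (FractionRing R)ˣ),
        (b : FractionRing R) = algebraMap R (FractionRing R) a ∧
        z = ((KaehlerDifferential.D ℤ (ResidueField R)) (residue R a), 0)
            - (0, (residue R a) ⊗ₜ[ℤ] Additive.ofMul b)}


section Aux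

variable {R : Type*} [CommRing R] [IsDomain R] [IsDiscreteValuationRing R]

local notation "K" => FractionRing R
local notation "F" => ResidueField R

lemma dvr_algMap_ne_zero {π : R} (hπ : Irreducible π) :
    algebraMap R K π ≠ 0 := by
  simpa [IsFractionRing.to_map_eq_zero_iff] using hπ.ne_zero

/-- Existence of the decomposition `b = u · π^j` in `Kˣ`. -/
lemma dvr_decomp {π : R} (hπ : Irreducible π) (b : Kˣ) :
    ∃ (u : Rˣ) (j : ℤ),
      (b : K) = algebraMap R K (u : R) * (algebraMap R K π) ^ j := by
  obtain ⟨r, s, hs, hrs⟩ := IsFractionRing.div_surjective (A := R) (b : K)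
  have hs0 : s ≠ 0 := nonZeroDivisors.ne_zero hs
  have hr0 : r ≠ 0 := by
    rintro rfl
    simp only [map_zero, zero_div] at hrs
    exact b.ne_zero hrs.symm
  obtain ⟨m, u₁, hru⟩ := IsDiscreteValuationRing.eq_unit_mul_pow_irreducible hr0 hπ
  obtain ⟨n, u₂, hsu⟩ := IsDiscreteValuationRing.eq_unit_mul_pow_irreducible hs0 hπ
  have hP : algebraMap R K π ≠ 0 := dvr_algMap_ne_zero hπ
  have hsK : algebraMap R K s ≠ 0 := by
    simpa [IsFractionRing.to_map_eq_zero_iff] using hs0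
  refine ⟨u₁ * u₂⁻¹, (m : ℤ) - (n : ℤ), ?_⟩
  rw [← hrs, hru, hsu]
  rw [zpow_sub₀ hP, zpow_natCast, zpow_natCast]
  rw [hsu] at hsK
  rw [← mul_div_assoc, div_eq_div_iff hsK (pow_ne_zero n hP)]
  have hu2 : algebraMap R K ((u₂⁻¹ : Rˣ) : R) * algebraMap R K ((u₂ : Rˣ) : R) = 1 := by
    rw [← map_mul, Units.inv_mul, map_one]
  simp only [map_mul, map_pow, Units.val_mul]
  linear_combination (-(algebraMap R K ((u₁ : Rˣ) : R) * (algebraMap R K π) ^ m *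
    (algebraMap R K π) ^ n)) * hu2

lemma dvr_decomp_unique_le {π : R} (hπ : Irreducible π) {u₁ u₂ : Rˣ} {j₁ j₂ : ℤ}
    (hle : j₁ ≤ j₂)
    (h : algebraMap R K (u₁ : R) * (algebraMap R K π) ^ j₁ =
        algebraMap R K (u₂ : R) * (algebraMap R K π) ^ j₂) :
    u₁ = u₂ ∧ j₁ = j₂ := by
  have hP : algebraMap R K π ≠ 0 := dvr_algMap_ne_zero hπ
  have hinj : Function.Injective (algebraMap R K) := IsFractionRing.injective R K
  set d : ℕ := (j₂ - j₁).toNat with hd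
  have hdj : (d : ℤ) = j₂ - j₁ := Int.toNat_of_nonneg (by omega)
  have h2 : algebraMap R K (u₁ : R) = algebraMap R K ((u₂ : R) * π ^ d) := by
    have : (algebraMap R K π) ^ j₂ = (algebraMap R K π) ^ j₁ * (algebraMap R K π) ^ (d : ℤ) := by
      rw [← zpow_add₀ hP]; ring_nf
      rw [hdj]; ring_nf
    rw [this] at h
    have hpz : (algebraMap R K π) ^ j₁ ≠ 0 := zpow_ne_zero _ hP
    have h4 : algebraMap R K (u₁ : R) * (algebraMap R K π) ^ j₁ =
        (algebraMap R K (u₂ : R) * (algebraMap R K π) ^ (d : ℤ)) * (algebraMap R K π) ^ j₁ := by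
      rw [h]; ring
    have h5 := mul_right_cancel₀ hpz h4
    rw [map_mul, map_pow, ← zpow_natCast (algebraMap R K π) d]
    exact h5
  have h3 : (u₁ : R) = (u₂ : R) * π ^ d := hinj h2
  have hdu : IsUnit (π ^ d) := by
    have : IsUnit ((u₂ : R) * π ^ d) := by rw [← h3]; exact u₁.isUnit
    exact isUnit_of_mul_isUnit_right this
  have hd0 : d = 0 := by
    by_contra hdd
    exact hπ.not_isUnit (isUnit_of_dvd_unit (dvd_pow_self π hdd) hdu)
  constructor
  · ext; rw [h3, hd0]; simp
  · omega

lemma dvr_decomp_unique {π : R} (hπ : Irreducible π) {u₁ u₂ : Rˣ} {j₁ j₂ : ℤ}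
    (h : algebraMap R K (u₁ : R) * (algebraMap R K π) ^ j₁ =
        algebraMap R K (u₂ : R) * (algebraMap R K π) ^ j₂) :
    u₁ = u₂ ∧ j₁ = j₂ := by
  rcases le_total j₁ j₂ with hle | hle
  · exact dvr_decomp_unique_le hπ hle h
  · obtain ⟨h1, h2⟩ := dvr_decomp_unique_le hπ hle h.symm
    exact ⟨h1.symm, h2.symm⟩

/-- The unit part of `b : Kˣ` w.r.t. the uniformizer `π`. -/
noncomputable def uPart {π : R} (hπ : Irreducible π) (b : Kˣ) : Rˣ :=
  (dvr_decomp hπ b).choose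

/-- The valuation of `b : Kˣ` w.r.t. the uniformizer `π`. -/
noncomputable def vPart {π : R} (hπ : Irreducible π) (b : Kˣ) : ℤ :=
  (dvr_decomp hπ b).choose_spec.choose

lemma uPart_vPart_spec {π : R} (hπ : Irreducible π) (b : Kˣ) :
    (b : K) = algebraMap R K ((uPart hπ b : Rˣ) : R) *
      (algebraMap R K π) ^ (vPart hπ b) :=
  (dvr_decomp hπ b).choose_spec.choose_spec

lemma uPart_vPart_eq {π : R} (hπ : Irreducible π) {b : Kˣ} {u : Rˣ} {j : ℤ}
    (h : (b : K) = algebraMap R K (u : R) * (algebraMap R K π) ^ j) :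
    uPart hπ b = u ∧ vPart hπ b = j :=
  dvr_decomp_unique hπ ((uPart_vPart_spec hπ b).symm.trans h)

lemma uPart_one {π : R} (hπ : Irreducible π) : uPart hπ (1 : Kˣ) = 1 :=
  (uPart_vPart_eq hπ (u := 1) (j := 0) (by simp)).1

lemma vPart_one {π : R} (hπ : Irreducible π) : vPart hπ (1 : Kˣ) = 0 :=
  (uPart_vPart_eq hπ (u := 1) (j := 0) (by simp)).2

lemma decomp_mul {π : R} (hπ : Irreducible π) (b c : Kˣ) :
    uPart hπ (b * c) = uPart hπ b * uPart hπ c ∧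
      vPart hπ (b * c) = vPart hπ b + vPart hπ c := by
  have hP : algebraMap R K π ≠ 0 := dvr_algMap_ne_zero hπ
  apply uPart_vPart_eq hπ
  push_cast
  rw [uPart_vPart_spec hπ b, uPart_vPart_spec hπ c, zpow_add₀ hP]
  ring

end Aux

section Aux2

variable {R : Type*} [CommRing R] [IsDomain R] [IsDiscreteValuationRing R]

local notation "K" => FractionRing R
local notation "F" => ResidueField R

/-- The valuation `Kˣ →+ ℤ` (written additively). -/
noncomputable def vHom {π : R} (hπ : Irreducible π) : Additive Kˣ →+ ℤ where
  toFun b := vPart hπ b.toMul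
  map_zero' := vPart_one hπ
  map_add' b c := (decomp_mul hπ b.toMul c.toMul).2

/-- The logarithmic derivative `Kˣ →+ Ω¹_F`. -/
noncomputable def dlogF {π : R} (hπ : Irreducible π) :
    Additive Kˣ →+ KaehlerDifferential ℤ F where
  toFun b := (residue R ((uPart hπ b.toMul : Rˣ) : R))⁻¹ •
    (KaehlerDifferential.D ℤ F) (residue R ((uPart hπ b.toMul : Rˣ) : R))
  map_zero' := by
    show (residue R ((uPart hπ (1 : Kˣ) : Rˣ) : R))⁻¹ •
      (KaehlerDifferential.D ℤ F) (residue R ((uPart hπ (1 : Kˣ) : Rˣ) : R)) = 0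
    rw [uPart_one hπ]
    simp
  map_add' b c := by
    show (residue R ((uPart hπ (b.toMul * c.toMul) : Rˣ) : R))⁻¹ •
      (KaehlerDifferential.D ℤ F) (residue R ((uPart hπ (b.toMul * c.toMul) : Rˣ) : R)) = _
    rw [(decomp_mul hπ b.toMul c.toMul).1]
    set x := residue R ((uPart hπ b.toMul : Rˣ) : R) with hx_def
    set y := residue R ((uPart hπ c.toMul : Rˣ) : R) with hy_def
    have hx : x ≠ 0 := ((uPart hπ b.toMul).isUnit.map (residue R)).ne_zero
    have hy : y ≠ 0 := ((uPart hπ c.toMul).isUnit.map (residue R)).ne_zero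
    have hxy : residue R ((uPart hπ b.toMul * uPart hπ c.toMul : Rˣ) : R) = x * y := by
      rw [Units.val_mul, map_mul]
    rw [hxy, Derivation.leibniz, smul_add, smul_smul, smul_smul]
    have h1 : (x * y)⁻¹ * x = y⁻¹ := by field_simp
    have h2 : (x * y)⁻¹ * y = x⁻¹ := by field_simp
    rw [h1, h2, add_comm]

end Aux2

set_option maxHeartbeats 2000000 in
/-- Let `R` be a complete discrete valuation ring of characteristic
`p > 0` with fraction field `K`, residue field `F`, and uniformizer `π`.  Let
`Ω¹_F(log)` be the quotient of `Ω¹_F ⊕ (F ⊗_ℤ K^×)` by the relations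
`(d ā, 0) = (0, ā ⊗ a)` (`a ∈ R ∖ {0}`).  Then there is an exact sequence of
`F`-vector spaces `0 → Ω¹_F → Ω¹_F(log) → F → 0`, where the first map is induced by
the inclusion of the first summand and the second map (the residue) sends the class of
`(0, x ⊗ b)` to `x·v(b)` — expressed below by its value on `b = u·π^j` (`u ∈ R^×`,
`j ∈ ℤ`); moreover the sequence is split by `dlog[π]`, the class of `(0, 1 ⊗ π)`:
the map `x ↦ x • dlog[π]` is a section of the residue map. -/
theorem stmt19 (p : ℕ) (hp : p.Prime) (R : Type*) [CommRing R] [IsDomain R]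
    [IsDiscreteValuationRing R] [CharP R p]
    [IsAdicComplete (maximalIdeal R) R]
    (π : R) (hπ : Irreducible π)
    (πK : (FractionRing R)ˣ) (hπK : (πK : FractionRing R) = algebraMap R (FractionRing R) π) :
    ∃ res : (logPresModule R ⧸ logRelations R) →ₗ[ResidueField R] (ResidueField R),
      (∀ (x : ResidueField R) (b : (FractionRing R)ˣ) (u : Rˣ) (j : ℤ),
          (b : FractionRing R) =
            algebraMap R (FractionRing R) (u : R) * (algebraMap R (FractionRing R) π) ^ j →
          res ((logRelations R).mkQ (0, x ⊗ₜ[ℤ] Additive.ofMul b)) =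
            x * (j : ResidueField R)) ∧
      Function.Injective
        ((logRelations R).mkQ ∘ₗ
          LinearMap.inl (ResidueField R) (KaehlerDifferential ℤ (ResidueField R))
            (TensorProduct ℤ (ResidueField R) (Additive (FractionRing R)ˣ))) ∧
      LinearMap.range
        ((logRelations R).mkQ ∘ₗ
          LinearMap.inl (ResidueField R) (KaehlerDifferential ℤ (ResidueField R))
            (TensorProduct ℤ (ResidueField R) (Additive (FractionRing R)ˣ))) =
        LinearMap.ker res ∧
      Function.Surjective res ∧
      (∀ x : ResidueField R,
        res (x • (logRelations R).mkQ
            (0, (1 : ResidueField R) ⊗ₜ[ℤ] Additive.ofMul πK)) = x) := by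
  classical
  have hP : algebraMap R (FractionRing R) π ≠ 0 := dvr_algMap_ne_zero hπ
  -- the residue-map candidate on the presentation module
  let vF : Additive (FractionRing R)ˣ →+ ResidueField R :=
    (Int.castAddHom (ResidueField R)).comp (vHom hπ)
  let φ : TensorProduct ℤ (ResidueField R) (Additive (FractionRing R)ˣ)
      →ₗ[ResidueField R] ResidueField R :=
    @LinearMap.liftBaseChange _ _ _ _ _ _ _ _ _ _ _ _ AddCommGroup.intIsScalarTower vF.toIntLinearMap
  have hφ : ∀ (x : ResidueField R) (b : (FractionRing R)ˣ),
      φ (x ⊗ₜ[ℤ] Additive.ofMul b) = x * (vPart hπ b : ResidueField R) := by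
    intro x b
    show x • ((vPart hπ b : ℤ) : ResidueField R) = _
    rw [smul_eq_mul]
  -- the retraction candidate
  let θ : TensorProduct ℤ (ResidueField R) (Additive (FractionRing R)ˣ)
      →ₗ[ResidueField R] KaehlerDifferential ℤ (ResidueField R) :=
    @LinearMap.liftBaseChange _ _ _ _ _ _ _ _ _ _ _ _ AddCommGroup.intIsScalarTower
      (dlogF hπ).toIntLinearMap
  have hθ : ∀ (x : ResidueField R) (b : (FractionRing R)ˣ),
      θ (x ⊗ₜ[ℤ] Additive.ofMul b) =
        x • ((residue R ((uPart hπ b : Rˣ) : R))⁻¹ •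
          (KaehlerDifferential.D ℤ (ResidueField R)) (residue R ((uPart hπ b : Rˣ) : R))) := by
    intro x b
    rfl
  let resPres : logPresModule R →ₗ[ResidueField R] ResidueField R :=
    φ ∘ₗ LinearMap.snd _ _ _
  let ψ : logPresModule R →ₗ[ResidueField R] KaehlerDifferential ℤ (ResidueField R) :=
    LinearMap.fst _ _ _ + θ ∘ₗ LinearMap.snd _ _ _
  -- key computation on the relation generators
  have hgen : ∀ (a : R) (b : (FractionRing R)ˣ),
      (b : FractionRing R) = algebraMap R (FractionRing R) a →
      residue R a * ((vPart hπ b : ℤ) : ResidueField R) = 0 ∧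
      (KaehlerDifferential.D ℤ (ResidueField R)) (residue R a) =
        residue R a • ((residue R ((uPart hπ b : Rˣ) : R))⁻¹ •
          (KaehlerDifferential.D ℤ (ResidueField R)) (residue R ((uPart hπ b : Rˣ) : R))) := by
    intro a b hb
    have ha : a ≠ 0 := by
      rintro rfl
      rw [map_zero] at hb
      exact b.ne_zero hb
    obtain ⟨n, w, rfl⟩ := IsDiscreteValuationRing.eq_unit_mul_pow_irreducible ha hπ
    have hb' : (b : FractionRing R) = algebraMap R (FractionRing R) ((w : Rˣ) : R) *
        (algebraMap R (FractionRing R) π) ^ (n : ℤ) := by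
      rw [hb, map_mul, map_pow, zpow_natCast]
    obtain ⟨hu, hv⟩ := uPart_vPart_eq hπ hb'
    rw [hu, hv]
    rcases n with _ | n
    · have hres : residue R (((w : Rˣ) : R) * π ^ 0) = residue R ((w : Rˣ) : R) := by
        rw [pow_zero, mul_one]
      have hw : residue R ((w : Rˣ) : R) ≠ 0 := (w.isUnit.map (residue R)).ne_zero
      refine ⟨by simp, ?_⟩
      rw [hres, smul_smul, mul_inv_cancel₀ hw, one_smul]
    · have hres : residue R (((w : Rˣ) : R) * π ^ (n + 1)) = 0 := by
        rw [IsLocalRing.residue_eq_zero_iff]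
        exact Ideal.mul_mem_left _ _
          (Ideal.pow_mem_of_mem _ ((IsLocalRing.mem_maximalIdeal π).mpr hπ.not_isUnit) _ n.succ_pos)
      rw [hres]
      simp
  have hker_res : logRelations R ≤ LinearMap.ker resPres := by
    rw [logRelations, Submodule.span_le]
    rintro z ⟨a, b, hb, rfl⟩
    obtain ⟨h1, -⟩ := hgen a b hb
    simp only [SetLike.mem_coe, LinearMap.mem_ker, map_sub, resPres, LinearMap.coe_comp,
      Function.comp_apply, LinearMap.snd_apply, map_zero, hφ, zero_sub, neg_eq_zero]
    exact h1
  have hker_ψ : logRelations R ≤ LinearMap.ker ψ := by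
    rw [logRelations, Submodule.span_le]
    rintro z ⟨a, b, hb, rfl⟩
    obtain ⟨-, h2⟩ := hgen a b hb
    simp only [SetLike.mem_coe, LinearMap.mem_ker, ψ, LinearMap.add_apply,
      LinearMap.coe_comp, Function.comp_apply, LinearMap.snd_apply, LinearMap.fst_apply,
      map_sub, map_zero, hθ, sub_zero, zero_sub, map_neg]
    rw [h2]
    abel
  -- the residue map and the retraction on the quotient
  set res := (logRelations R).liftQ resPres hker_res with hres_def
  set s := (logRelations R).liftQ ψ hker_ψ with hs_def
  have hres_tmul : ∀ (x : ResidueField R) (b : (FractionRing R)ˣ),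
      res ((logRelations R).mkQ (0, x ⊗ₜ[ℤ] Additive.ofMul b)) =
        x * ((vPart hπ b : ℤ) : ResidueField R) := by
    intro x b
    rw [Submodule.mkQ_apply, hres_def, Submodule.liftQ_apply]
    simpa [resPres] using hφ x b
  refine ⟨res, ?_, ?_, ?_, ?_, ?_⟩
  · -- value of the residue map
    intro x b u j hb
    rw [hres_tmul, (uPart_vPart_eq hπ hb).2]
  · -- injectivity
    have hsec : ∀ ω, s (((logRelations R).mkQ ∘ₗ
        LinearMap.inl (ResidueField R) (KaehlerDifferential ℤ (ResidueField R))
          (TensorProduct ℤ (ResidueField R) (Additive (FractionRing R)ˣ))) ω) = ω := by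
      intro ω
      rw [LinearMap.comp_apply, LinearMap.inl_apply, Submodule.mkQ_apply, hs_def,
        Submodule.liftQ_apply]
      simp [ψ]
    exact Function.LeftInverse.injective hsec
  · -- exactness in the middle
    have hres_inl : ∀ ω, res (((logRelations R).mkQ ∘ₗ
        LinearMap.inl (ResidueField R) (KaehlerDifferential ℤ (ResidueField R))
          (TensorProduct ℤ (ResidueField R) (Additive (FractionRing R)ˣ))) ω) = 0 := by
      intro ω
      rw [LinearMap.comp_apply, LinearMap.inl_apply, Submodule.mkQ_apply, hres_def,
        Submodule.liftQ_apply]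
      simp [resPres]
    set incl := (logRelations R).mkQ ∘ₗ
        LinearMap.inl (ResidueField R) (KaehlerDifferential ℤ (ResidueField R))
          (TensorProduct ℤ (ResidueField R) (Additive (FractionRing R)ˣ)) with hincl_def
    set dπ := (logRelations R).mkQ (0, (1 : ResidueField R) ⊗ₜ[ℤ] Additive.ofMul πK) with hdπ_def
    -- membership of unit tensors in the range of `incl`
    have hunit_mem : ∀ (x : ResidueField R) (u : Rˣ),
        (logRelations R).mkQ (0, x ⊗ₜ[ℤ] Additive.ofMul
          (Units.map (algebraMap R (FractionRing R) : R →* FractionRing R) u)) ∈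
          LinearMap.range incl := by
      intro x u
      set uK := Units.map (algebraMap R (FractionRing R) : R →* FractionRing R) u with huK_def
      have hrel : (((KaehlerDifferential.D ℤ (ResidueField R)) (residue R (u : R)), 0)
          - (0, (residue R (u : R)) ⊗ₜ[ℤ] Additive.ofMul uK) : logPresModule R)
          ∈ logRelations R :=
        Submodule.subset_span ⟨(u : R), uK, rfl, rfl⟩
      have h0 : (logRelations R).mkQ (0, (residue R (u : R)) ⊗ₜ[ℤ] Additive.ofMul uK) =
          (logRelations R).mkQ ((KaehlerDifferential.D ℤ (ResidueField R)) (residue R (u : R)), 0) := by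
        symm
        rw [← sub_eq_zero, ← map_sub, Submodule.mkQ_apply, Submodule.Quotient.mk_eq_zero]
        exact hrel
      have hw : residue R ((u : R)) ≠ 0 := (u.isUnit.map (residue R)).ne_zero
      have hx : ((0 : KaehlerDifferential ℤ (ResidueField R)),
            x ⊗ₜ[ℤ] Additive.ofMul uK) =
          (x * (residue R (u : R))⁻¹) •
            ((0 : KaehlerDifferential ℤ (ResidueField R)),
              (residue R (u : R)) ⊗ₜ[ℤ] Additive.ofMul uK) := by
        rw [Prod.smul_mk, smul_zero, TensorProduct.smul_tmul', smul_eq_mul,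
          mul_assoc, inv_mul_cancel₀ hw, mul_one]
      rw [hx, map_smul, h0]
      exact ⟨(x * (residue R (u : R))⁻¹) •
        (KaehlerDifferential.D ℤ (ResidueField R)) (residue R (u : R)), by
          rw [hincl_def]; simp⟩
    -- every element differs from an element of the range by a multiple of `dπ`
    have key : ∀ q : logPresModule R ⧸ logRelations R,
        q - res q • dπ ∈ LinearMap.range incl := by
      have hSm : ∀ m : logPresModule R,
          (logRelations R).mkQ m - res ((logRelations R).mkQ m) • dπ ∈ LinearMap.range incl := by
        have hS : ∀ m : logPresModule R, m ∈ Submodule.comap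
            ((LinearMap.id - (LinearMap.toSpanSingleton (ResidueField R) _ dπ) ∘ₗ res) ∘ₗ
              (logRelations R).mkQ) (LinearMap.range incl) := by
          have hfirst : ∀ ω : KaehlerDifferential ℤ (ResidueField R),
              ((ω, 0) : logPresModule R) ∈ Submodule.comap
                ((LinearMap.id - (LinearMap.toSpanSingleton (ResidueField R) _ dπ) ∘ₗ res) ∘ₗ
                  (logRelations R).mkQ) (LinearMap.range incl) := by
            intro ω
            simp only [Submodule.mem_comap, LinearMap.comp_apply, LinearMap.sub_apply,
              LinearMap.id_apply, LinearMap.toSpanSingleton_apply]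
            have : res ((logRelations R).mkQ (ω, 0)) = 0 := hres_inl ω
            rw [this, zero_smul, sub_zero]
            exact ⟨ω, by rw [hincl_def]; simp⟩
          have hsecond : ∀ t : TensorProduct ℤ (ResidueField R) (Additive (FractionRing R)ˣ),
              ((0, t) : logPresModule R) ∈ Submodule.comap
                ((LinearMap.id - (LinearMap.toSpanSingleton (ResidueField R) _ dπ) ∘ₗ res) ∘ₗ
                  (logRelations R).mkQ) (LinearMap.range incl) := by
            intro t
            induction t using TensorProduct.induction_on with
            | zero => exact Submodule.zero_mem _
            | add t₁ t₂ h₁ h₂ =>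
              have h3 : ((0, t₁ + t₂) : logPresModule R) = (0, t₁) + (0, t₂) := by simp
              rw [h3]
              exact Submodule.add_mem _ h₁ h₂
            | tmul x b =>
              simp only [Submodule.mem_comap, LinearMap.comp_apply, LinearMap.sub_apply,
                LinearMap.id_apply, LinearMap.toSpanSingleton_apply]
              set u := uPart hπ b.toMul with hu_def
              set j := vPart hπ b.toMul with hj_def
              set uK := Units.map (algebraMap R (FractionRing R) : R →* FractionRing R) u
                with huK_def
              have hbu : b.toMul = uK * πK ^ j := by
                ext
                rw [Units.val_mul, Units.val_zpow_eq_zpow_val, hπK, huK_def, Units.coe_map]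
                exact uPart_vPart_spec hπ b.toMul
              have hofMul : b = Additive.ofMul uK + j • Additive.ofMul πK := by
                have e0 : Additive.ofMul (πK ^ j) = j • Additive.ofMul πK := ofMul_zpow j πK
                rw [← e0]
                show b = Additive.ofMul uK + Additive.ofMul (πK ^ j)
                rw [← ofMul_mul, ← hbu]
                rfl
              have e1 : (x ⊗ₜ[ℤ] (j • Additive.ofMul πK) :
                    TensorProduct ℤ (ResidueField R) (Additive (FractionRing R)ˣ)) =
                  j • (x ⊗ₜ[ℤ] Additive.ofMul πK) :=
                TensorProduct.tmul_smul j x (Additive.ofMul πK)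
              have hb2 : (x ⊗ₜ[ℤ] b : TensorProduct ℤ (ResidueField R)
                    (Additive (FractionRing R)ˣ)) =
                  x ⊗ₜ[ℤ] Additive.ofMul uK + j • (x ⊗ₜ[ℤ] Additive.ofMul πK) := by
                rw [hofMul, TensorProduct.tmul_add, e1]
              have e3 : (((0 : KaehlerDifferential ℤ (ResidueField R)),
                    j • (x ⊗ₜ[ℤ] Additive.ofMul πK)) : logPresModule R) =
                  j • (((0 : KaehlerDifferential ℤ (ResidueField R)),
                    x ⊗ₜ[ℤ] Additive.ofMul πK) : logPresModule R) := by
                refine Prod.ext ?_ ?_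
                · exact (smul_zero j).symm
                · rfl
              have hq : (logRelations R).mkQ (0, x ⊗ₜ[ℤ] b) =
                  (logRelations R).mkQ (0, x ⊗ₜ[ℤ] Additive.ofMul uK) +
                    j • (logRelations R).mkQ (0, x ⊗ₜ[ℤ] Additive.ofMul πK) := by
                rw [hb2]
                have e5 : (((0 : KaehlerDifferential ℤ (ResidueField R)),
                    x ⊗ₜ[ℤ] Additive.ofMul uK + j • (x ⊗ₜ[ℤ] Additive.ofMul πK)) :
                      logPresModule R) =
                    (0, x ⊗ₜ[ℤ] Additive.ofMul uK) +
                      ((0 : KaehlerDifferential ℤ (ResidueField R)),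
                        j • (x ⊗ₜ[ℤ] Additive.ofMul πK)) := by
                  simp
                have e6 : (logRelations R).mkQ
                    (j • (((0 : KaehlerDifferential ℤ (ResidueField R)),
                      x ⊗ₜ[ℤ] Additive.ofMul πK) : logPresModule R)) =
                    j • (logRelations R).mkQ
                      ((0 : KaehlerDifferential ℤ (ResidueField R)),
                        x ⊗ₜ[ℤ] Additive.ofMul πK) :=
                  map_zsmul ((logRelations R).mkQ) j _
                rw [e5, map_add, e3, e6]
              have hπtensor : (logRelations R).mkQ
                  ((0 : KaehlerDifferential ℤ (ResidueField R)),
                    x ⊗ₜ[ℤ] Additive.ofMul πK) = x • dπ := by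
                rw [hdπ_def, ← map_smul]
                congr 1
                rw [Prod.smul_mk, smul_zero, TensorProduct.smul_tmul', smul_eq_mul, mul_one]
              have hresq := hres_tmul x b.toMul
              rw [ofMul_toMul] at hresq
              rw [hresq, hq, hπtensor]
              have e4 : j • (x • dπ) = (x * ((j : ℤ) : ResidueField R)) • dπ := by
                have h6 : j • (x • dπ) = (((j : ℤ) : ResidueField R)) • (x • dπ) :=
                  (Int.cast_smul_eq_zsmul (ResidueField R) j _).symm
                rw [h6, smul_smul, mul_comm]
              rw [e4]
              have efin : (logRelations R).mkQ (0, x ⊗ₜ[ℤ] Additive.ofMul uK) +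
                  (x * ((j : ℤ) : ResidueField R)) • dπ -
                    (x * ((j : ℤ) : ResidueField R)) • dπ =
                  (logRelations R).mkQ (0, x ⊗ₜ[ℤ] Additive.ofMul uK) := by abel
              rw [efin]
              exact hunit_mem x u
          intro m
          obtain ⟨ω, t⟩ := m
          have hsplit : ((ω, t) : logPresModule R) = (ω, 0) + (0, t) := by simp
          rw [hsplit]
          exact Submodule.add_mem _ (hfirst ω) (hsecond t)
        intro m
        have := hS m
        simpa only [Submodule.mem_comap, LinearMap.comp_apply, LinearMap.sub_apply,
          LinearMap.id_apply, LinearMap.toSpanSingleton_apply] using this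
      intro q
      obtain ⟨m, rfl⟩ := Submodule.mkQ_surjective _ q
      exact hSm m
    apply le_antisymm
    · rintro q ⟨ω, rfl⟩
      exact LinearMap.mem_ker.mpr (hres_inl ω)
    · intro q hq
      have h := key q
      rw [LinearMap.mem_ker] at hq
      rwa [hq, zero_smul, sub_zero] at h
  · -- surjectivity
    intro y
    refine ⟨y • (logRelations R).mkQ
      (0, (1 : ResidueField R) ⊗ₜ[ℤ] Additive.ofMul πK), ?_⟩
    have hvπ : vPart hπ πK = 1 := by
      refine (uPart_vPart_eq hπ (u := 1) (j := 1) ?_).2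
      rw [hπK]; simp
    rw [map_smul, hres_tmul, hvπ]
    simp
  · -- the splitting
    intro x
    have hvπ : vPart hπ πK = 1 := by
      refine (uPart_vPart_eq hπ (u := 1) (j := 1) ?_).2
      rw [hπK]; simp
    rw [map_smul, hres_tmul, hvπ]
    simp
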